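/- Let f : ℝ → ℝ be continuously differentiable and compactly supported, with support contained in [0, ∞). Define the Abel transform g(u) = 2 ∫_{u}^{∞} f(x) · x/√(x² − u²) dx for u > 0. Then g is differentiable on (0, ∞) and the inversion formula holds: for every x > 0, f(x) = −(1/π) ∫_{x}^{∞} g'(u)/√(u² − x²) du. -/

import Mathlib

open Real MeasureTheory

lemma hasDerivAt_sqrt_sq_add {c t : ℝ} (h : t ^ 2 + c ^ 2 ≠ 0) :
    HasDerivAt (fun s => Real.sqrt (s ^ 2 + c ^ 2)) (t / Real.sqrt (t ^ 2 + c ^ 2)) t := by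
  have h1 : HasDerivAt (fun s : ℝ => s ^ 2 + c ^ 2) (2 * t) t := by
    simpa using ((hasDerivAt_pow 2 t).add_const (c ^ 2))
  have h2 := (Real.hasDerivAt_sqrt h).comp t h1
  have hpos : 0 < t ^ 2 + c ^ 2 := lt_of_le_of_ne (by positivity) (Ne.symm h)
  have hs : Real.sqrt (t ^ 2 + c ^ 2) ≠ 0 := by positivity
  refine h2.congr_deriv ?_
  field_simp

lemma sqrt_image {c : ℝ} (hc : 0 < c) :
    (fun t => Real.sqrt (t ^ 2 + c ^ 2)) '' (Set.Ioi 0) = Set.Ioi c := by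
  ext y
  constructor
  · rintro ⟨t, ht, rfl⟩
    have ht' : (0:ℝ) < t := ht
    have : Real.sqrt (c ^ 2) < Real.sqrt (t ^ 2 + c ^ 2) :=
      Real.sqrt_lt_sqrt (sq_nonneg c) (by nlinarith)
    rwa [Real.sqrt_sq hc.le] at this
  · intro hy
    have hy' : c < y := hy
    have h1 : (0:ℝ) < y ^ 2 - c ^ 2 := by nlinarith
    refine ⟨Real.sqrt (y ^ 2 - c ^ 2), ?_, ?_⟩
    · exact Real.sqrt_pos.2 h1
    · show Real.sqrt (Real.sqrt (y ^ 2 - c ^ 2) ^ 2 + c ^ 2) = y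
      rw [Real.sq_sqrt h1.le, sub_add_cancel, Real.sqrt_sq (by linarith)]

lemma abel_sub {c : ℝ} (hc : 0 < c) (F : ℝ → ℝ) :
    ∫ x in Set.Ioi c, F x
      = ∫ t in Set.Ioi (0:ℝ), (t / Real.sqrt (t ^ 2 + c ^ 2)) * F (Real.sqrt (t ^ 2 + c ^ 2)) := by
  have hderiv : ∀ t ∈ Set.Ioi (0:ℝ), HasDerivWithinAt (fun t => Real.sqrt (t ^ 2 + c ^ 2))
      (t / Real.sqrt (t ^ 2 + c ^ 2)) (Set.Ioi 0) t := fun t _ =>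
    (hasDerivAt_sqrt_sq_add (by positivity)).hasDerivWithinAt
  have hinj : Set.InjOn (fun t => Real.sqrt (t ^ 2 + c ^ 2)) (Set.Ioi 0) := by
    intro a ha b hb h
    have ha' : (0:ℝ) < a := ha
    have hb' : (0:ℝ) < b := hb
    have h2 : a ^ 2 + c ^ 2 = b ^ 2 + c ^ 2 := by
      have := congrArg (· ^ 2) h
      simpa [Real.sq_sqrt (by positivity : (0:ℝ) ≤ a ^ 2 + c ^ 2),
        Real.sq_sqrt (by positivity : (0:ℝ) ≤ b ^ 2 + c ^ 2)] using this
    nlinarith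
  rw [← sqrt_image hc, integral_image_eq_integral_abs_deriv_smul measurableSet_Ioi hderiv hinj F]
  refine setIntegral_congr_fun measurableSet_Ioi fun t ht => ?_
  have ht' : (0:ℝ) < t := ht
  rw [smul_eq_mul, abs_of_nonneg (by positivity)]

lemma deriv_zero_of_notMem_tsupport {f : ℝ → ℝ} {y : ℝ} (hy : y ∉ tsupport f) :
    deriv f y = 0 := by
  have h : f =ᶠ[nhds y] (fun _ => 0) := by
    have : IsOpen (tsupport f)ᶜ := (isClosed_tsupport f).isOpen_compl
    filter_upwards [this.mem_nhds hy] with z hz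
    exact image_eq_zero_of_notMem_tsupport hz
  rw [h.deriv_eq, deriv_const]

lemma hasDerivAt_f_comp {f : ℝ → ℝ} (hf : ContDiff ℝ 1 f) {c t : ℝ} (h : t ^ 2 + c ^ 2 ≠ 0) :
    HasDerivAt (fun s => f (Real.sqrt (s ^ 2 + c ^ 2)))
      (deriv f (Real.sqrt (t ^ 2 + c ^ 2)) * (t / Real.sqrt (t ^ 2 + c ^ 2))) t :=
  ((hf.differentiable one_ne_zero _).hasDerivAt).comp t (hasDerivAt_sqrt_sq_add h)

-- representation of the Abel transform integrand
lemma abel_rep {f : ℝ → ℝ} {u : ℝ} (hu : 0 < u) :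
    ∫ x in Set.Ioi u, f x * x / Real.sqrt (x ^ 2 - u ^ 2)
      = ∫ t in Set.Ioi (0:ℝ), f (Real.sqrt (t ^ 2 + u ^ 2)) := by
  rw [abel_sub hu (fun x => f x * x / Real.sqrt (x ^ 2 - u ^ 2))]
  refine setIntegral_congr_fun measurableSet_Ioi fun t ht => ?_
  have ht' : (0:ℝ) < t := ht
  have h1 : (0:ℝ) ≤ t ^ 2 + u ^ 2 := by positivity
  have h2 : Real.sqrt (t ^ 2 + u ^ 2) ^ 2 - u ^ 2 = t ^ 2 := by
    rw [Real.sq_sqrt h1]; ring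
  have h3 : (0:ℝ) < Real.sqrt (t ^ 2 + u ^ 2) := by positivity
  rw [h2, Real.sqrt_sq ht'.le]
  field_simp

lemma hasDerivAt_sqrt_add_sq {a v : ℝ} (ha : 0 ≤ a) (h : a + v ^ 2 ≠ 0) :
    HasDerivAt (fun w => Real.sqrt (a + w ^ 2)) (v / Real.sqrt (a + v ^ 2)) v := by
  have h1 : HasDerivAt (fun w : ℝ => a + w ^ 2) (2 * v) v := by
    simpa [mul_comm] using ((hasDerivAt_pow 2 v).const_add a)
  have h2 := (Real.hasDerivAt_sqrt h).comp v h1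
  have hpos : 0 < a + v ^ 2 := lt_of_le_of_ne (by positivity) (Ne.symm h)
  have hs : Real.sqrt (a + v ^ 2) ≠ 0 := by positivity
  refine h2.congr_deriv ?_
  field_simp

lemma hasDerivAt_f_comp' {f : ℝ → ℝ} (hf : ContDiff ℝ 1 f) {a v : ℝ} (ha : 0 ≤ a) (h : a + v ^ 2 ≠ 0) :
    HasDerivAt (fun w => f (Real.sqrt (a + w ^ 2)))
      (deriv f (Real.sqrt (a + v ^ 2)) * (v / Real.sqrt (a + v ^ 2))) v :=
  ((hf.differentiable one_ne_zero _).hasDerivAt).comp v (hasDerivAt_sqrt_add_sq ha h)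

lemma abs_le_sqrt_sq_add (t v : ℝ) : |t| ≤ Real.sqrt (t ^ 2 + v ^ 2) := by
  rw [← Real.sqrt_sq_eq_abs]
  exact Real.sqrt_le_sqrt (by nlinarith [sq_nonneg v])

set_option maxHeartbeats 1000000 in
lemma abel_hasDerivAt {f : ℝ → ℝ} (hf : ContDiff ℝ 1 f) {R M : ℝ} (hR : 0 < R)
    (hfR : tsupport f ⊆ Set.Icc (-R) R) (hM : ∀ y, |deriv f y| ≤ M)
    {u : ℝ} (hu : 0 < u) :
    HasDerivAt (fun v => ∫ t in Set.Ioi (0:ℝ), f (Real.sqrt (t ^ 2 + v ^ 2)))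
      (∫ t in Set.Ioi (0:ℝ),
        deriv f (Real.sqrt (t ^ 2 + u ^ 2)) * (u / Real.sqrt (t ^ 2 + u ^ 2))) u := by
  have hM0 : 0 ≤ M := le_trans (abs_nonneg _) (hM 0)
  have hcont : ∀ v : ℝ, Continuous fun t : ℝ => f (Real.sqrt (t ^ 2 + v ^ 2)) := fun v =>
    hf.continuous.comp (Real.continuous_sqrt.comp (by continuity))
  have hF_meas : ∀ᶠ v in nhds u, AEStronglyMeasurable
      (fun t : ℝ => f (Real.sqrt (t ^ 2 + v ^ 2))) (volume.restrict (Set.Ioi 0)) :=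
    Filter.Eventually.of_forall fun v => ((hcont v).aestronglyMeasurable).restrict
  have hF_int : Integrable (fun t : ℝ => f (Real.sqrt (t ^ 2 + u ^ 2)))
      (volume.restrict (Set.Ioi 0)) := by
    have hcs : HasCompactSupport fun t : ℝ => f (Real.sqrt (t ^ 2 + u ^ 2)) := by
      apply HasCompactSupport.intro (isCompact_Icc (a := -R) (b := R))
      intro t ht
      apply image_eq_zero_of_notMem_tsupport
      intro hmem
      have h1 := (hfR hmem).2
      have h2 : R < |t| := not_le.1 fun h => ht (Set.mem_Icc.2 (abs_le.1 h))
      have h3 := abs_le_sqrt_sq_add t u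
      linarith
    exact ((hcont u).integrable_of_hasCompactSupport hcs).restrict
  have hF'_meas : AEStronglyMeasurable
      (fun t : ℝ => deriv f (Real.sqrt (t ^ 2 + u ^ 2)) * (u / Real.sqrt (t ^ 2 + u ^ 2)))
      (volume.restrict (Set.Ioi 0)) := by
    have : Continuous fun t : ℝ =>
        deriv f (Real.sqrt (t ^ 2 + u ^ 2)) * (u / Real.sqrt (t ^ 2 + u ^ 2)) := by
      refine Continuous.mul ((hf.continuous_deriv le_rfl).comp
        (Real.continuous_sqrt.comp (by continuity))) ?_
      refine continuous_const.div (Real.continuous_sqrt.comp (by continuity)) fun t => ?_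
      have : (0:ℝ) < Real.sqrt (t ^ 2 + u ^ 2) := Real.sqrt_pos.2 (by positivity)
      exact ne_of_gt this
    exact this.aestronglyMeasurable.restrict
  have h_bound : ∀ᵐ t ∂(volume.restrict (Set.Ioi (0:ℝ))), ∀ v ∈ Metric.ball u (u/2),
      ‖deriv f (Real.sqrt (t ^ 2 + v ^ 2)) * (v / Real.sqrt (t ^ 2 + v ^ 2))‖
        ≤ Set.indicator (Set.Icc (-R) R) (fun _ => M) t := by
    refine Filter.Eventually.of_forall fun t v hv => ?_
    have hv0 : 0 < v := by
      have h := Metric.mem_ball.1 hv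
      rw [Real.dist_eq] at h
      have := abs_lt.1 h
      linarith [this.1]
    have hs0 : (0:ℝ) < Real.sqrt (t ^ 2 + v ^ 2) := Real.sqrt_pos.2 (by positivity)
    by_cases hcase : |t| ≤ R
    · rw [Set.indicator_of_mem (Set.mem_Icc.2 (abs_le.1 hcase))]
      have h1 : |v / Real.sqrt (t ^ 2 + v ^ 2)| ≤ 1 := by
        rw [abs_div, abs_of_nonneg hv0.le, abs_of_nonneg (Real.sqrt_nonneg _)]
        rw [div_le_one hs0]
        have := abs_le_sqrt_sq_add v t
        rw [abs_of_nonneg hv0.le] at this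
        calc v ≤ Real.sqrt (v ^ 2 + t ^ 2) := this
        _ = Real.sqrt (t ^ 2 + v ^ 2) := by rw [add_comm]
      calc ‖deriv f (Real.sqrt (t ^ 2 + v ^ 2)) * (v / Real.sqrt (t ^ 2 + v ^ 2))‖
          = |deriv f (Real.sqrt (t ^ 2 + v ^ 2))| * |v / Real.sqrt (t ^ 2 + v ^ 2)| :=
            abs_mul _ _
        _ ≤ M * 1 := mul_le_mul (hM _) h1 (abs_nonneg _) hM0
        _ = M := mul_one M
    · have h2 : R < |t| := not_le.1 hcase
      have h3 : deriv f (Real.sqrt (t ^ 2 + v ^ 2)) = 0 := by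
        apply deriv_zero_of_notMem_tsupport
        intro hmem
        have := (hfR hmem).2
        have := abs_le_sqrt_sq_add t v
        linarith
      rw [h3, zero_mul, norm_zero]
      exact Set.indicator_nonneg (fun _ _ => hM0) t
  have bound_int : Integrable (Set.indicator (Set.Icc (-R) R) (fun _ => M))
      (volume.restrict (Set.Ioi (0:ℝ))) := by
    rw [integrable_indicator_iff measurableSet_Icc]
    exact integrableOn_const (lt_of_le_of_lt
      (Measure.restrict_apply_le _ _) measure_Icc_lt_top).ne
  have h_diff : ∀ᵐ t ∂(volume.restrict (Set.Ioi (0:ℝ))), ∀ v ∈ Metric.ball u (u/2),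
      HasDerivAt (fun w => f (Real.sqrt (t ^ 2 + w ^ 2)))
        (deriv f (Real.sqrt (t ^ 2 + v ^ 2)) * (v / Real.sqrt (t ^ 2 + v ^ 2))) v := by
    refine Filter.Eventually.of_forall fun t v hv => ?_
    have hv0 : 0 < v := by
      have h := Metric.mem_ball.1 hv
      rw [Real.dist_eq] at h
      have := abs_lt.1 h
      linarith [this.1]
    exact hasDerivAt_f_comp' hf (sq_nonneg t) (by positivity)
  have main := hasDerivAt_integral_of_dominated_loc_of_deriv_le
    (μ := volume.restrict (Set.Ioi 0))
    (F := fun v t => f (Real.sqrt (t ^ 2 + v ^ 2)))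
    (F' := fun v t => deriv f (Real.sqrt (t ^ 2 + v ^ 2)) * (v / Real.sqrt (t ^ 2 + v ^ 2)))
    (Metric.ball_mem_nhds u (half_pos hu)) hF_meas hF_int hF'_meas h_bound bound_int h_diff
  exact main.2

lemma abel_ftc {f : ℝ → ℝ} (hf : ContDiff ℝ 1 f) {R : ℝ}
    (hfR : tsupport f ⊆ Set.Icc (-R) R) {x : ℝ} (hx : 0 < x) :
    ∫ r in Set.Ioi (0:ℝ),
      deriv f (Real.sqrt (x ^ 2 + r ^ 2)) * (r / Real.sqrt (x ^ 2 + r ^ 2)) = - f x := by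
  have habs : ∀ r : ℝ, |r| ≤ Real.sqrt (x ^ 2 + r ^ 2) := fun r => by
    rw [add_comm]; exact abs_le_sqrt_sq_add r x
  have hzero : ∀ r : ℝ, R < r → f (Real.sqrt (x ^ 2 + r ^ 2)) = 0 := by
    intro r hr
    apply image_eq_zero_of_notMem_tsupport
    intro hmem
    have h1 := (hfR hmem).2
    have h2 := habs r
    have h3 : r ≤ |r| := le_abs_self r
    linarith
  have hderiv : ∀ r ∈ Set.Ioi (0:ℝ), HasDerivAt (fun w => f (Real.sqrt (x ^ 2 + w ^ 2)))
      (deriv f (Real.sqrt (x ^ 2 + r ^ 2)) * (r / Real.sqrt (x ^ 2 + r ^ 2))) r :=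
    fun r _ => hasDerivAt_f_comp' hf (sq_nonneg x) (by positivity)
  have hcont : ContinuousWithinAt (fun w => f (Real.sqrt (x ^ 2 + w ^ 2))) (Set.Ici 0) 0 :=
    (hf.continuous.comp (Real.continuous_sqrt.comp (by continuity))).continuousWithinAt
  have hint : IntegrableOn (fun r => deriv f (Real.sqrt (x ^ 2 + r ^ 2)) *
      (r / Real.sqrt (x ^ 2 + r ^ 2))) (Set.Ioi 0) := by
    have hc : Continuous fun r : ℝ => deriv f (Real.sqrt (x ^ 2 + r ^ 2)) *
        (r / Real.sqrt (x ^ 2 + r ^ 2)) := by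
      refine Continuous.mul ((hf.continuous_deriv le_rfl).comp
        (Real.continuous_sqrt.comp (by continuity))) ?_
      refine continuous_id.div (Real.continuous_sqrt.comp (by continuity)) fun r => ?_
      exact ne_of_gt (Real.sqrt_pos.2 (by positivity))
    have hcs : HasCompactSupport fun r : ℝ => deriv f (Real.sqrt (x ^ 2 + r ^ 2)) *
        (r / Real.sqrt (x ^ 2 + r ^ 2)) := by
      apply HasCompactSupport.intro (isCompact_Icc (a := -R) (b := R))
      intro r hr
      have h2 : R < |r| := not_le.1 fun h => hr (Set.mem_Icc.2 (abs_le.1 h))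
      have h3 : deriv f (Real.sqrt (x ^ 2 + r ^ 2)) = 0 := by
        apply deriv_zero_of_notMem_tsupport
        intro hmem
        have := (hfR hmem).2
        have := habs r
        linarith
      rw [h3, zero_mul]
    exact (hc.integrable_of_hasCompactSupport hcs).integrableOn
  have htend : Filter.Tendsto (fun w => f (Real.sqrt (x ^ 2 + w ^ 2))) Filter.atTop (nhds 0) := by
    apply Filter.Tendsto.congr' _ tendsto_const_nhds
    filter_upwards [Filter.Ioi_mem_atTop R] with r hr
    exact (hzero r hr).symm
  have := integral_Ioi_of_hasDerivAt_of_tendsto hcont hderiv hint htend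
  rw [this]
  norm_num [Real.sqrt_sq hx.le]

set_option maxHeartbeats 1000000 in
/-- Abel inversion formula: for a continuously differentiable, compactly supported
`f : ℝ → ℝ` with support in `[0,∞)`, the Abel transform
`g(u) = 2 ∫_{u}^{∞} f(x) x/√(x² − u²) dx` is differentiable on `(0,∞)` and
`f(x) = −(1/π) ∫_{x}^{∞} g'(u)/√(u² − x²) du` for every `x > 0`. -/
theorem abel_inversion (f : ℝ → ℝ) (hf : ContDiff ℝ 1 f) (hsupp : HasCompactSupport f)
    (hpos : tsupport f ⊆ Set.Ici 0)
    (g : ℝ → ℝ)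
    (hg : g = fun u => 2 * ∫ x in Set.Ioi u, f x * x / sqrt (x ^ 2 - u ^ 2)) :
    (∀ u : ℝ, 0 < u → DifferentiableAt ℝ g u) ∧
    (∀ x : ℝ, 0 < x →
      f x = -(1 / π) * ∫ u in Set.Ioi x, deriv g u / sqrt (u ^ 2 - x ^ 2)) := by
  obtain ⟨R₀, hR₀⟩ := hsupp.isCompact.isBounded.subset_closedBall 0
  set R := max R₀ 1 with hRdef
  have hR : (0:ℝ) < R := lt_of_lt_of_le one_pos (le_max_right _ _)
  have hfR : tsupport f ⊆ Set.Icc (-R) R := by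
    intro y hy
    have h1 := hR₀ hy
    rw [Metric.mem_closedBall, Real.dist_eq, sub_zero] at h1
    exact Set.mem_Icc.2 (abs_le.1 (le_trans h1 (le_max_left _ _)))
  obtain ⟨M, hM⟩ := (hsupp.deriv).exists_bound_of_continuous (hf.continuous_deriv le_rfl)
  have hM' : ∀ y, |deriv f y| ≤ M := fun y => by simpa [Real.norm_eq_abs] using hM y
  have hG : ∀ u : ℝ, 0 < u → HasDerivAt g
      (2 * ∫ t in Set.Ioi (0:ℝ),
        deriv f (Real.sqrt (t ^ 2 + u ^ 2)) * (u / Real.sqrt (t ^ 2 + u ^ 2))) u := by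
    intro u hu
    have h1 := (abel_hasDerivAt hf hR hfR hM' hu).const_mul 2
    apply h1.congr_of_eventuallyEq
    filter_upwards [Ioi_mem_nhds hu] with v hv
    rw [hg]
    dsimp only
    rw [abel_rep (Set.mem_Ioi.1 hv)]
  refine ⟨fun u hu => (hG u hu).differentiableAt, ?_⟩
  have hderivg : ∀ u : ℝ, 0 < u → deriv g u
      = 2 * ∫ t in Set.Ioi (0:ℝ),
          deriv f (Real.sqrt (t ^ 2 + u ^ 2)) * (u / Real.sqrt (t ^ 2 + u ^ 2)) :=
    fun u hu => (hG u hu).deriv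
  intro x hx
  set P : ℝ × ℝ → ℝ := fun p =>
    deriv f (Real.sqrt (p.2 ^ 2 + (p.1 ^ 2 + x ^ 2))) /
      Real.sqrt (p.2 ^ 2 + (p.1 ^ 2 + x ^ 2)) with hPdef
  -- Step 1: substitution u = sqrt (s^2 + x^2)
  have step1 : (∫ u in Set.Ioi x, deriv g u / Real.sqrt (u ^ 2 - x ^ 2))
      = ∫ s in Set.Ioi (0:ℝ), 2 * ∫ t in Set.Ioi (0:ℝ), P (s, t) := by
    rw [abel_sub hx (fun u => deriv g u / Real.sqrt (u ^ 2 - x ^ 2))]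
    refine setIntegral_congr_fun measurableSet_Ioi fun s hs => ?_
    have hs' : (0:ℝ) < s := hs
    have hsx : (0:ℝ) < s ^ 2 + x ^ 2 := by positivity
    have hv : (0:ℝ) < Real.sqrt (s ^ 2 + x ^ 2) := Real.sqrt_pos.2 hsx
    rw [hderivg _ hv, Real.sq_sqrt hsx.le, add_sub_cancel_right, Real.sqrt_sq hs'.le]
    have expand : ∀ t : ℝ, deriv f (Real.sqrt (t ^ 2 + (s ^ 2 + x ^ 2))) *
        (Real.sqrt (s ^ 2 + x ^ 2) / Real.sqrt (t ^ 2 + (s ^ 2 + x ^ 2)))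
        = Real.sqrt (s ^ 2 + x ^ 2) * P (s, t) := fun t => by
      simp only [hPdef]
      ring
    simp_rw [expand]
    rw [integral_const_mul]
    field_simp
  rw [step1, integral_const_mul]
  -- Facts about P
  have hkey : ∀ a b : ℝ, a ^ 2 ≤ b → |a| ≤ Real.sqrt b := fun a b h => by
    rw [← Real.sqrt_sq_eq_abs]; exact Real.sqrt_le_sqrt h
  have hPcont : Continuous P := by
    refine Continuous.div ((hf.continuous_deriv le_rfl).comp
      (Real.continuous_sqrt.comp (by continuity)))
      (Real.continuous_sqrt.comp (by continuity)) fun p => ?_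
    exact ne_of_gt (Real.sqrt_pos.2 (by positivity))
  have hPcs : HasCompactSupport P := by
    apply HasCompactSupport.intro
      (isCompact_Icc.prod isCompact_Icc :
        IsCompact (Set.Icc (-R) R ×ˢ Set.Icc (-R) R))
    intro p hp
    have h0 : deriv f (Real.sqrt (p.2 ^ 2 + (p.1 ^ 2 + x ^ 2))) = 0 := by
      apply deriv_zero_of_notMem_tsupport
      intro hmem
      have h1 := (hfR hmem).2
      have h2 : R < |p.1| ∨ R < |p.2| := by
        by_contra hcon
        push_neg at hcon
        exact hp (Set.mem_prod.2 ⟨Set.mem_Icc.2 (abs_le.1 hcon.1),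
          Set.mem_Icc.2 (abs_le.1 hcon.2)⟩)
      have k1 : |p.1| ≤ Real.sqrt (p.2 ^ 2 + (p.1 ^ 2 + x ^ 2)) :=
        hkey _ _ (by nlinarith [sq_nonneg p.2, sq_nonneg x])
      have k2 : |p.2| ≤ Real.sqrt (p.2 ^ 2 + (p.1 ^ 2 + x ^ 2)) :=
        hkey _ _ (by nlinarith [sq_nonneg p.1, sq_nonneg x])
      rcases h2 with h | h
      · linarith
      · linarith
    simp only [hPdef]
    rw [h0, zero_div]
  have hPint : Integrable P := hPcont.integrable_of_hasCompactSupport hPcs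
  -- Step 4: iterated integral
  have h4 : (∫ p, P p) = ∫ s : ℝ, ∫ t : ℝ, P (s, t) := by
    rw [MeasureTheory.Measure.volume_eq_prod]
    exact integral_prod P (by rwa [← MeasureTheory.Measure.volume_eq_prod])
  have h5 : ∀ s : ℝ, (∫ t : ℝ, P (s, t)) = 2 * ∫ t in Set.Ioi (0:ℝ), P (s, t) := by
    intro s
    have he : (fun t : ℝ => P (s, |t|)) = fun t : ℝ => P (s, t) :=
      funext fun t => by simp only [hPdef, sq_abs]
    conv_lhs => rw [← he]
    exact integral_comp_abs (f := fun t : ℝ => P (s, t))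
  have h6 : (∫ s : ℝ, ∫ t : ℝ, P (s, t)) = 2 * ∫ s in Set.Ioi (0:ℝ), ∫ t : ℝ, P (s, t) := by
    have he : (fun s : ℝ => ∫ t : ℝ, P (|s|, t)) = fun s : ℝ => ∫ t : ℝ, P (s, t) :=
      funext fun s => by
        congr 1
        funext t
        simp only [hPdef, sq_abs]
    conv_lhs => rw [← he]
    exact integral_comp_abs (f := fun s : ℝ => ∫ t : ℝ, P (s, t))
  have hplane : (∫ p, P p) = 4 * ∫ s in Set.Ioi (0:ℝ), ∫ t in Set.Ioi (0:ℝ), P (s, t) := by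
    rw [h4, h6,
      show (∫ s in Set.Ioi (0:ℝ), ∫ t : ℝ, P (s, t))
          = ∫ s in Set.Ioi (0:ℝ), 2 * ∫ t in Set.Ioi (0:ℝ), P (s, t) from
        setIntegral_congr_fun measurableSet_Ioi fun s _ => h5 s,
      integral_const_mul]
    ring
  -- Step 7: polar coordinates
  have hpolar : (∫ p, P p) = (- f x) * (2 * π) := by
    rw [← integral_comp_polarCoord_symm P]
    have htarget : polarCoord.target = Set.Ioi (0:ℝ) ×ˢ Set.Ioo (-π) π := rfl
    rw [htarget]
    have hfun : ∀ p : ℝ × ℝ, p.1 • P (polarCoord.symm p)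
        = (fun r => deriv f (Real.sqrt (x ^ 2 + r ^ 2)) *
            (r / Real.sqrt (x ^ 2 + r ^ 2))) p.1 * (fun _ : ℝ => (1:ℝ)) p.2 := by
      intro p
      rw [polarCoord_symm_apply]
      simp only [hPdef]
      have harg : (p.1 * Real.sin p.2) ^ 2 + ((p.1 * Real.cos p.2) ^ 2 + x ^ 2)
          = x ^ 2 + p.1 ^ 2 := by
        linear_combination p.1 ^ 2 * (Real.sin_sq_add_cos_sq p.2)
      rw [harg, smul_eq_mul]
      ring
    rw [setIntegral_congr_fun (measurableSet_Ioi.prod measurableSet_Ioo)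
      fun p _ => hfun p]
    rw [MeasureTheory.Measure.volume_eq_prod]
    rw [setIntegral_prod_mul (μ := (volume : Measure ℝ)) (ν := (volume : Measure ℝ))
      (fun r => deriv f (Real.sqrt (x ^ 2 + r ^ 2)) * (r / Real.sqrt (x ^ 2 + r ^ 2)))
      (fun _ : ℝ => (1:ℝ)) (Set.Ioi 0) (Set.Ioo (-π) π)]
    rw [abel_ftc hf hfR hx, setIntegral_const, Real.volume_real_Ioo, smul_eq_mul, mul_one,
      max_eq_left (by linarith [Real.pi_pos])]
    ring
  have hkey2 : (∫ s in Set.Ioi (0:ℝ), ∫ t in Set.Ioi (0:ℝ), P (s, t))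
      = (- f x) * (2 * π) / 4 := by
    rw [← hpolar, hplane]; ring
  rw [hkey2]
  field_simp
  ring
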